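/- Change-of-Trajectory-Measure Lemma: For every policy π, every policy μ whose step-wise occupancy measures have full support (d_h^μ(s,a) > 0 for all 1 ≤ h ≤ H, s ∈ S_h, a ∈ A), and every family of functions f_h : S_h × A → ℝ (1 ≤ h ≤ H), one has (E_π[Σ_{h=1}^H f_h(s_h,a_h)])² ≤ (1 + Σ_{h=1}^H χ²(d_h^π ‖ d_h^μ)) · E_μ[(Σ_{h=1}^H f_h(s_h,a_h))²]. -/

import Mathlib

open Finset

namespace TBRM

/-- `p` is a probability mass function on a finite type. -/
def IsPMF {X : Type*} [Fintype X] (p : X → ℝ) : Prop :=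
  (∀ x, 0 ≤ p x) ∧ ∑ x, p x = 1

/-- χ²-divergence between pmfs on a finite type. -/
noncomputable def chiSq {X : Type*} [Fintype X] (p q : X → ℝ) : ℝ :=
  (∑ x, p x ^ 2 / q x) - 1

variable {H : ℕ} {S : Fin (H + 1) → Type*} {A : Type*}
variable [∀ i, Fintype (S i)] [∀ i, DecidableEq (S i)] [Fintype A] [DecidableEq A]

/-- Density of a full trajectory (including the extra final state `s_{H+1}`),
under initial distribution `ρ`, transition kernels `P`, and policy `π`. -/
noncomputable def trajDensity (ρ : S 0 → ℝ)
    (P : ∀ h : Fin H, S h.castSucc → A → S h.succ → ℝ)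
    (π : ∀ h : Fin H, S h.castSucc → A → ℝ)
    (s : ∀ i : Fin (H + 1), S i) (a : Fin H → A) : ℝ :=
  ρ (s 0) * ∏ h : Fin H, (π h (s h.castSucc) (a h) * P h (s h.castSucc) (a h) (s h.succ))

/-- Expectation of a trajectory functional under policy `π`. -/
noncomputable def expTraj (ρ : S 0 → ℝ)
    (P : ∀ h : Fin H, S h.castSucc → A → S h.succ → ℝ)
    (π : ∀ h : Fin H, S h.castSucc → A → ℝ)
    (f : (∀ i : Fin (H + 1), S i) → (Fin H → A) → ℝ) : ℝ :=
  ∑ s : ∀ i : Fin (H + 1), S i, ∑ a : Fin H → A, trajDensity ρ P π s a * f s a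

/-- Step-`h` occupancy measure `d_h^π(x,b)`. -/
noncomputable def occ (ρ : S 0 → ℝ)
    (P : ∀ h : Fin H, S h.castSucc → A → S h.succ → ℝ)
    (π : ∀ h : Fin H, S h.castSucc → A → ℝ)
    (h : Fin H) (x : S h.castSucc) (b : A) : ℝ :=
  expTraj ρ P π (fun s a => if s h.castSucc = x ∧ a h = b then 1 else 0)


set_option linter.unusedSectionVars false

/-- Backward-recursive conditional value of `Θ (c + ∑_{j ≥ k} u_j)`. -/
noncomputable def W (P : ∀ h : Fin H, S h.castSucc → A → S h.succ → ℝ)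
    (ν : ∀ h : Fin H, S h.castSucc → A → ℝ)
    (u : ∀ h : Fin H, S h.castSucc → A → ℝ) (Θ : ℝ → ℝ) :
    ∀ k : Fin (H + 1), S k → ℝ → ℝ :=
  Fin.reverseInduction (fun _ c => Θ c)
    (fun h Wh x c => ∑ b : A, ν h x b * ∑ x' : S h.succ, P h x b x' * Wh x' (c + u h x b))

@[simp] lemma W_last (P : ∀ h : Fin H, S h.castSucc → A → S h.succ → ℝ)
    (ν u : ∀ h : Fin H, S h.castSucc → A → ℝ) (Θ : ℝ → ℝ) (x : S (Fin.last H)) (c : ℝ) :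
    W P ν u Θ (Fin.last H) x c = Θ c := by
  simp [W]

@[simp] lemma W_castSucc (P : ∀ h : Fin H, S h.castSucc → A → S h.succ → ℝ)
    (ν u : ∀ h : Fin H, S h.castSucc → A → ℝ) (Θ : ℝ → ℝ) (h : Fin H)
    (x : S h.castSucc) (c : ℝ) :
    W P ν u Θ h.castSucc x c
      = ∑ b : A, ν h x b * ∑ x' : S h.succ, P h x b x' * W P ν u Θ h.succ x' (c + u h x b) := by
  simp [W]

/-- Backward-recursive value function for per-step rewards `u`. -/
noncomputable def Jgen (P : ∀ h : Fin H, S h.castSucc → A → S h.succ → ℝ)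
    (ν : ∀ h : Fin H, S h.castSucc → A → ℝ)
    (u : ∀ h : Fin H, S h.castSucc → A → ℝ) :
    ∀ k : Fin (H + 1), S k → ℝ :=
  Fin.reverseInduction (fun _ => 0)
    (fun h Jh x => ∑ b : A, ν h x b * (u h x b + ∑ x' : S h.succ, P h x b x' * Jh x'))

@[simp] lemma Jgen_last (P : ∀ h : Fin H, S h.castSucc → A → S h.succ → ℝ)
    (ν u : ∀ h : Fin H, S h.castSucc → A → ℝ) (x : S (Fin.last H)) :
    Jgen P ν u (Fin.last H) x = 0 := by
  simp [Jgen]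

@[simp] lemma Jgen_castSucc (P : ∀ h : Fin H, S h.castSucc → A → S h.succ → ℝ)
    (ν u : ∀ h : Fin H, S h.castSucc → A → ℝ) (h : Fin H) (x : S h.castSucc) :
    Jgen P ν u h.castSucc x
      = ∑ b : A, ν h x b * (u h x b + ∑ x' : S h.succ, P h x b x' * Jgen P ν u h.succ x') := by
  simp [Jgen]


set_option linter.unusedSectionVars false

universe u v

lemma sum_pi_fin_succ {n : ℕ} (T : Fin (n + 1) → Type u) [∀ i, Fintype (T i)]
    (g : (∀ i, T i) → ℝ) :
    ∑ s : ∀ i, T i, g s = ∑ x : T 0, ∑ s' : ∀ i : Fin n, T i.succ, g (Fin.cons x s') := by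
  rw [← Equiv.sum_comp (Fin.consEquiv T) g, Fintype.sum_prod_type]
  simp [Fin.consEquiv]

lemma W_shift {n : ℕ} (T : Fin (n + 2) → Type u) [∀ i, Fintype (T i)] [∀ i, DecidableEq (T i)]
    {B : Type v} [Fintype B] [DecidableEq B]
    (P : ∀ h : Fin (n + 1), T h.castSucc → B → T h.succ → ℝ)
    (ν u : ∀ h : Fin (n + 1), T h.castSucc → B → ℝ) (Θ : ℝ → ℝ) (c0 : ℝ) :
    ∀ (k : Fin (n + 1)) (x : T k.succ) (c : ℝ),
      W (S := fun i : Fin (n + 1) => T i.succ) (fun h => P h.succ) (fun h => ν h.succ)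
          (fun h => u h.succ) (fun r => Θ (c0 + r)) k x c
        = W P ν u Θ k.succ x (c0 + c) := by
  intro k
  induction k using Fin.reverseInduction with
  | last =>
    intro x c
    have h1 : W P ν u Θ (Fin.last n).succ x (c0 + c)
        = W P ν u Θ (Fin.last (n + 1)) x (c0 + c) := rfl
    rw [h1, W_last, W_last]
  | cast i IHi =>
    intro x c
    have h1 : W P ν u Θ (Fin.castSucc i).succ x (c0 + c)
        = W P ν u Θ (Fin.castSucc i.succ) x (c0 + c) := rfl
    rw [h1, W_castSucc, W_castSucc]
    refine Finset.sum_congr rfl fun b _ => ?_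
    congr 1
    refine Finset.sum_congr rfl fun x' _ => ?_
    congr 1
    rw [IHi, add_assoc]

lemma expTraj_theta_sum (n : ℕ) :
    ∀ (T : Fin (n + 1) → Type u) [∀ i, Fintype (T i)] [∀ i, DecidableEq (T i)]
      (B : Type v) [Fintype B] [DecidableEq B]
      (ρ : T 0 → ℝ) (P : ∀ h : Fin n, T h.castSucc → B → T h.succ → ℝ)
      (ν u : ∀ h : Fin n, T h.castSucc → B → ℝ) (Θ : ℝ → ℝ),
      expTraj ρ P ν (fun s a => Θ (∑ h, u h (s h.castSucc) (a h)))
        = ∑ x, ρ x * W P ν u Θ 0 x 0 := by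
  induction n with
  | zero =>
    intro T _ _ B _ _ ρ P ν u Θ
    have hW : ∀ x : T 0, W P ν u Θ 0 x 0 = Θ 0 := fun x => W_last P ν u Θ x 0
    simp only [hW, expTraj, trajDensity]
    rw [sum_pi_fin_succ T]
    simp
  | succ m IH =>
    intro T _ _ B _ _ ρ P ν u Θ
    have key : ∀ (x0 : T 0) (b0 : B),
        (∑ s' : ∀ i : Fin (m + 1), T i.succ, ∑ a' : Fin m → B,
          (P 0 x0 b0 (s' 0) * ∏ h : Fin m,
            (ν h.succ (s' h.castSucc) (a' h) * P h.succ (s' h.castSucc) (a' h) (s' h.succ)))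
            * Θ (u 0 x0 b0 + ∑ h : Fin m, u h.succ (s' h.castSucc) (a' h)))
        = ∑ x' : T (0 : Fin (m + 1)).succ, P 0 x0 b0 x' *
            W P ν u Θ ((0 : Fin (m + 1)).succ) x' (u 0 x0 b0 + 0) := by
      intro x0 b0
      have h1 := IH (fun i : Fin (m + 1) => T i.succ) B (P 0 x0 b0)
        (fun h => P h.succ) (fun h => ν h.succ) (fun h => u h.succ)
        (fun r => Θ (u 0 x0 b0 + r))
      refine Eq.trans ?_ (h1.trans ?_)
      · rfl
      · refine Finset.sum_congr rfl fun x' _ => ?_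
        rw [W_shift]
    have hW0 : ∀ x0 : T 0, W P ν u Θ 0 x0 0
        = ∑ b0 : B, ν 0 x0 b0 * ∑ x' : T (0 : Fin (m + 1)).succ,
            P 0 x0 b0 x' * W P ν u Θ ((0 : Fin (m + 1)).succ) x' ((0 : ℝ) + u 0 x0 b0) :=
      fun x0 => W_castSucc P ν u Θ 0 x0 0
    simp only [hW0, expTraj, trajDensity]
    rw [sum_pi_fin_succ T]
    refine Finset.sum_congr rfl fun x0 _ => ?_
    have hpt : ∀ (b0 : B) (s' : ∀ i : Fin (m + 1), T i.succ) (a' : Fin m → B),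
        (ρ (Fin.cons x0 s' 0) * ∏ h : Fin (m + 1),
            (ν h (Fin.cons x0 s' h.castSucc) (Fin.cons (α := fun _ => B) b0 a' h) *
             P h (Fin.cons x0 s' h.castSucc) (Fin.cons (α := fun _ => B) b0 a' h) (Fin.cons x0 s' h.succ)))
          * Θ (∑ h : Fin (m + 1), u h (Fin.cons x0 s' h.castSucc) (Fin.cons (α := fun _ => B) b0 a' h))
        = (ρ x0 * ν 0 x0 b0) *
            ((P 0 x0 b0 (s' 0) * ∏ h : Fin m,
              (ν h.succ (s' h.castSucc) (a' h) * P h.succ (s' h.castSucc) (a' h) (s' h.succ)))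
              * Θ (u 0 x0 b0 + ∑ h : Fin m, u h.succ (s' h.castSucc) (a' h))) := by
      intro b0 s' a'
      simp only [Fin.prod_univ_succ, Fin.sum_univ_succ, ← Fin.succ_castSucc,
        Fin.cons_succ, Fin.castSucc_zero, Fin.cons_zero]
      ring
    calc (∑ s' : ∀ i : Fin (m + 1), T i.succ, ∑ a : Fin (m + 1) → B, _)
        = ∑ s' : ∀ i : Fin (m + 1), T i.succ, ∑ b0 : B, ∑ a' : Fin m → B,
            (ρ (Fin.cons x0 s' 0) * ∏ h : Fin (m + 1),
              (ν h (Fin.cons x0 s' h.castSucc) (Fin.cons (α := fun _ => B) b0 a' h) *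
               P h (Fin.cons x0 s' h.castSucc) (Fin.cons (α := fun _ => B) b0 a' h) (Fin.cons x0 s' h.succ)))
            * Θ (∑ h : Fin (m + 1), u h (Fin.cons x0 s' h.castSucc) (Fin.cons (α := fun _ => B) b0 a' h)) := by
          exact Finset.sum_congr rfl fun s' _ => sum_pi_fin_succ (fun _ : Fin (m + 1) => B) _
      _ = ρ x0 * ∑ b0 : B, ν 0 x0 b0 * ∑ x' : T (0 : Fin (m + 1)).succ,
            P 0 x0 b0 x' * W P ν u Θ ((0 : Fin (m + 1)).succ) x' ((0 : ℝ) + u 0 x0 b0) := by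
          rw [Finset.sum_comm, Finset.mul_sum]
          refine Finset.sum_congr rfl fun b0 _ => ?_
          simp only [hpt b0]
          simp only [← Finset.mul_sum]
          rw [key x0 b0]
          simp only [add_zero, zero_add, mul_assoc]

lemma jensen_sq {ι : Type*} [Fintype ι] (p z : ι → ℝ) (hp : ∀ i, 0 ≤ p i)
    (hp1 : ∑ i, p i = 1) : (∑ i, p i * z i) ^ 2 ≤ ∑ i, p i * z i ^ 2 := by
  have h := Finset.sum_mul_sq_le_sq_mul_sq Finset.univ (fun i => Real.sqrt (p i))
    (fun i => Real.sqrt (p i) * z i)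
  have e1 : ∀ i, Real.sqrt (p i) * (Real.sqrt (p i) * z i) = p i * z i := fun i => by
    rw [← mul_assoc, Real.mul_self_sqrt (hp i)]
  have e2 : ∀ i, Real.sqrt (p i) ^ 2 = p i := fun i => Real.sq_sqrt (hp i)
  have e3 : ∀ i, (Real.sqrt (p i) * z i) ^ 2 = p i * z i ^ 2 := fun i => by
    rw [mul_pow, e2 i]
  calc (∑ i, p i * z i) ^ 2 = (∑ i, Real.sqrt (p i) * (Real.sqrt (p i) * z i)) ^ 2 := by
        rw [Finset.sum_congr rfl fun i _ => (e1 i)]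
    _ ≤ (∑ i, Real.sqrt (p i) ^ 2) * ∑ i, (Real.sqrt (p i) * z i) ^ 2 := h
    _ = ∑ i, p i * z i ^ 2 := by
        rw [Finset.sum_congr rfl fun i _ => (e2 i), hp1, one_mul,
          Finset.sum_congr rfl fun i _ => (e3 i)]

variable (P : ∀ h : Fin H, S h.castSucc → A → S h.succ → ℝ)
variable (ν μ : ∀ h : Fin H, S h.castSucc → A → ℝ)
variable (u : ∀ h : Fin H, S h.castSucc → A → ℝ)

lemma W_const (hP : ∀ h x b, IsPMF (P h x b)) (hν : ∀ h x, IsPMF (ν h x)) :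
    ∀ (k : Fin (H + 1)) (x : S k) (c : ℝ), W P ν u (fun _ => (1 : ℝ)) k x c = 1 := by
  intro k
  induction k using Fin.reverseInduction with
  | last => intro x c; simp
  | cast i IHi =>
    intro x c
    rw [W_castSucc]
    have e : ∀ b, ∑ x' : S i.succ, P i x b x' * W P ν u (fun _ => (1 : ℝ)) i.succ x'
        (c + u i x b) = 1 := by
      intro b
      simp only [IHi, mul_one]
      exact (hP i x b).2
    simp only [e, mul_one]
    exact (hν i x).2

lemma W_id (hP : ∀ h x b, IsPMF (P h x b)) (hν : ∀ h x, IsPMF (ν h x)) :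
    ∀ (k : Fin (H + 1)) (x : S k) (c : ℝ),
      W P ν u (fun r => r) k x c = c + Jgen P ν u k x := by
  intro k
  induction k using Fin.reverseInduction with
  | last => intro x c; simp
  | cast i IHi =>
    intro x c
    rw [W_castSucc, Jgen_castSucc]
    have e1 : ∀ b, ∑ x' : S i.succ, P i x b x' * W P ν u (fun r => r) i.succ x' (c + u i x b)
        = (c + u i x b) + ∑ x' : S i.succ, P i x b x' * Jgen P ν u i.succ x' := by
      intro b
      have pt : ∀ x' : S i.succ, P i x b x' * W P ν u (fun r => r) i.succ x' (c + u i x b)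
          = P i x b x' * (c + u i x b) + P i x b x' * Jgen P ν u i.succ x' := by
        intro x'; rw [IHi]; ring
      rw [Finset.sum_congr rfl fun x' _ => pt x', Finset.sum_add_distrib, ← Finset.sum_mul,
        (hP i x b).2, one_mul]
    simp only [e1]
    have e2 : ∀ b, ν i x b * ((c + u i x b) + ∑ x' : S i.succ, P i x b x' * Jgen P ν u i.succ x')
        = ν i x b * c + ν i x b * (u i x b + ∑ x' : S i.succ, P i x b x' * Jgen P ν u i.succ x') := by
      intro b; ring
    rw [Finset.sum_congr rfl fun b _ => e2 b, Finset.sum_add_distrib, ← Finset.sum_mul,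
      (hν i x).2, one_mul]

lemma W_sq (hP : ∀ h x b, IsPMF (P h x b)) (hν : ∀ h x, IsPMF (ν h x)) :
    ∀ (k : Fin (H + 1)) (x : S k) (c : ℝ),
      W P ν u (fun r => r ^ 2) k x c
        = c ^ 2 + 2 * c * Jgen P ν u k x + W P ν u (fun r => r ^ 2) k x 0 := by
  intro k
  induction k using Fin.reverseInduction with
  | last => intro x c; simp
  | cast i IHi =>
    intro x c
    rw [W_castSucc, W_castSucc, Jgen_castSucc]
    have e1 : ∀ b, ∑ x' : S i.succ, P i x b x' * W P ν u (fun r => r ^ 2) i.succ x' (c + u i x b)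
        = (c ^ 2 + 2 * c * u i x b)
          + 2 * c * (∑ x' : S i.succ, P i x b x' * Jgen P ν u i.succ x')
          + ∑ x' : S i.succ, P i x b x' * W P ν u (fun r => r ^ 2) i.succ x' (0 + u i x b) := by
      intro b
      have pt : ∀ x' : S i.succ, P i x b x' * W P ν u (fun r => r ^ 2) i.succ x' (c + u i x b)
          = P i x b x' * (c ^ 2 + 2 * c * u i x b)
            + 2 * c * (P i x b x' * Jgen P ν u i.succ x')
            + P i x b x' * W P ν u (fun r => r ^ 2) i.succ x' (0 + u i x b) := by
        intro x'
        rw [IHi x' (c + u i x b), IHi x' (0 + u i x b)]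
        ring
      rw [Finset.sum_congr rfl fun x' _ => pt x', Finset.sum_add_distrib, Finset.sum_add_distrib,
        ← Finset.sum_mul, (hP i x b).2, one_mul, ← Finset.mul_sum]
    simp only [e1]
    have e2 : ∀ b, ν i x b * ((c ^ 2 + 2 * c * u i x b)
          + 2 * c * (∑ x' : S i.succ, P i x b x' * Jgen P ν u i.succ x')
          + ∑ x' : S i.succ, P i x b x' * W P ν u (fun r => r ^ 2) i.succ x' (0 + u i x b))
        = ν i x b * c ^ 2
          + 2 * c * (ν i x b * (u i x b + ∑ x' : S i.succ, P i x b x' * Jgen P ν u i.succ x'))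
          + ν i x b * ∑ x' : S i.succ, P i x b x' * W P ν u (fun r => r ^ 2) i.succ x'
              (0 + u i x b) := by
      intro b; ring
    rw [Finset.sum_congr rfl fun b _ => e2 b, Finset.sum_add_distrib, Finset.sum_add_distrib,
      ← Finset.sum_mul, (hν i x).2, one_mul, ← Finset.mul_sum]

/-- The "advantage-like" martingale increment `Δ_h(x,b)` for policy `μ` and rewards `u`. -/
noncomputable def Dl (h : Fin H) (x : S h.castSucc) (b : A) : ℝ :=
  u h x b + (∑ x' : S h.succ, P h x b x' * Jgen P μ u h.succ x') - Jgen P μ u h.castSucc x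

lemma sum_mu_Dl (hμ : ∀ h x, IsPMF (μ h x)) (h : Fin H) (x : S h.castSucc) :
    ∑ b : A, μ h x b * Dl P μ u h x b = 0 := by
  have e : ∀ b, μ h x b * Dl P μ u h x b
      = μ h x b * (u h x b + ∑ x' : S h.succ, P h x b x' * Jgen P μ u h.succ x')
        - μ h x b * Jgen P μ u h.castSucc x := by
    intro b; simp only [Dl]; ring
  rw [Finset.sum_congr rfl fun b _ => e b, Finset.sum_sub_distrib, ← Jgen_castSucc,
    ← Finset.sum_mul, (hμ h x).2, one_mul, sub_self]

lemma Jgen_decomp (hpi : ∀ h x, IsPMF (ν h x)) :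
    ∀ (k : Fin (H + 1)) (x : S k),
      Jgen P ν u k x = Jgen P μ u k x + Jgen P ν (Dl P μ u) k x := by
  intro k
  induction k using Fin.reverseInduction with
  | last => intro x; simp
  | cast i IHi =>
    intro x
    rw [Jgen_castSucc, Jgen_castSucc (u := Dl P μ u)]
    have e : ∀ b, ν i x b * (u i x b + ∑ x' : S i.succ, P i x b x' * Jgen P ν u i.succ x')
        = ν i x b * Jgen P μ u i.castSucc x
          + ν i x b * (Dl P μ u i x b
              + ∑ x' : S i.succ, P i x b x' * Jgen P ν (Dl P μ u) i.succ x') := by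
      intro b
      have hs : ∑ x' : S i.succ, P i x b x' * Jgen P ν u i.succ x'
          = ∑ x' : S i.succ, P i x b x' * Jgen P μ u i.succ x'
            + ∑ x' : S i.succ, P i x b x' * Jgen P ν (Dl P μ u) i.succ x' := by
        rw [← Finset.sum_add_distrib]
        exact Finset.sum_congr rfl fun x' _ => by rw [IHi]; ring
      rw [hs]
      simp only [Dl]
      ring
    rw [Finset.sum_congr rfl fun b _ => e b, Finset.sum_add_distrib, ← Finset.sum_mul,
      (hpi i x).2, one_mul]

lemma Jgen_Dl_zero (hμ : ∀ h x, IsPMF (μ h x)) :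
    ∀ (k : Fin (H + 1)) (x : S k), Jgen P μ (Dl P μ u) k x = 0 := by
  intro k
  induction k using Fin.reverseInduction with
  | last => intro x; simp
  | cast i IHi =>
    intro x
    rw [Jgen_castSucc]
    have e : ∀ b, μ i x b * (Dl P μ u i x b
          + ∑ x' : S i.succ, P i x b x' * Jgen P μ (Dl P μ u) i.succ x')
        = μ i x b * Dl P μ u i x b := by
      intro b; simp only [IHi, mul_zero, Finset.sum_const_zero, add_zero]
    rw [Finset.sum_congr rfl fun b _ => e b, sum_mu_Dl P μ u hμ]


lemma K_lower (hP : ∀ h x b, IsPMF (P h x b)) (hμ : ∀ h x, IsPMF (μ h x)) :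
    ∀ (k : Fin (H + 1)) (x : S k),
      (Jgen P μ u k x) ^ 2 + Jgen P μ (fun h x b => (Dl P μ u h x b) ^ 2) k x
        ≤ W P μ u (fun r => r ^ 2) k x 0 := by
  intro k
  induction k using Fin.reverseInduction with
  | last => intro x; simp
  | cast i IHi =>
    intro x
    rw [W_castSucc, Jgen_castSucc (u := fun h x b => (Dl P μ u h x b) ^ 2)]
    simp only [zero_add]
    have step1 : ∀ b : A,
        (Jgen P μ u i.castSucc x + Dl P μ u i x b) ^ 2
          + ∑ x' : S i.succ, P i x b x' *
              Jgen P μ (fun h x b => (Dl P μ u h x b) ^ 2) i.succ x'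
        ≤ ∑ x' : S i.succ, P i x b x' * W P μ u (fun r => r ^ 2) i.succ x' (u i x b) := by
      intro b
      have hq : Jgen P μ u i.castSucc x + Dl P μ u i x b
          = ∑ x' : S i.succ, P i x b x' * (u i x b + Jgen P μ u i.succ x') := by
        have : ∑ x' : S i.succ, P i x b x' * (u i x b + Jgen P μ u i.succ x')
            = (∑ x' : S i.succ, P i x b x') * u i x b
              + ∑ x' : S i.succ, P i x b x' * Jgen P μ u i.succ x' := by
          rw [Finset.sum_mul, ← Finset.sum_add_distrib]
          exact Finset.sum_congr rfl fun x' _ => by ring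
        rw [this, (hP i x b).2, one_mul]
        simp only [Dl]
        ring
      have j : (∑ x' : S i.succ, P i x b x' * (u i x b + Jgen P μ u i.succ x')) ^ 2
          ≤ ∑ x' : S i.succ, P i x b x' * (u i x b + Jgen P μ u i.succ x') ^ 2 :=
        jensen_sq _ _ (fun x' => (hP i x b).1 x') (hP i x b).2
      have l2 : ∀ x' : S i.succ,
          P i x b x' * ((u i x b + Jgen P μ u i.succ x') ^ 2
              + Jgen P μ (fun h x b => (Dl P μ u h x b) ^ 2) i.succ x')
          ≤ P i x b x' * W P μ u (fun r => r ^ 2) i.succ x' (u i x b) := by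
        intro x'
        refine mul_le_mul_of_nonneg_left ?_ ((hP i x b).1 x')
        rw [W_sq P μ u hP hμ i.succ x' (u i x b)]
        have h3 := IHi x'
        nlinarith [h3]
      calc (Jgen P μ u i.castSucc x + Dl P μ u i x b) ^ 2
            + ∑ x' : S i.succ, P i x b x' *
                Jgen P μ (fun h x b => (Dl P μ u h x b) ^ 2) i.succ x'
          ≤ ∑ x' : S i.succ, P i x b x' * (u i x b + Jgen P μ u i.succ x') ^ 2
            + ∑ x' : S i.succ, P i x b x' *
                Jgen P μ (fun h x b => (Dl P μ u h x b) ^ 2) i.succ x' := by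
            rw [hq]; exact add_le_add_left j _
        _ = ∑ x' : S i.succ, P i x b x' * ((u i x b + Jgen P μ u i.succ x') ^ 2
              + Jgen P μ (fun h x b => (Dl P μ u h x b) ^ 2) i.succ x') := by
            rw [← Finset.sum_add_distrib]
            exact Finset.sum_congr rfl fun x' _ => by ring
        _ ≤ ∑ x' : S i.succ, P i x b x' * W P μ u (fun r => r ^ 2) i.succ x' (u i x b) :=
            Finset.sum_le_sum fun x' _ => l2 x'
    have outer : ∀ b : A,
        μ i x b * ((Jgen P μ u i.castSucc x + Dl P μ u i x b) ^ 2
          + ∑ x' : S i.succ, P i x b x' *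
              Jgen P μ (fun h x b => (Dl P μ u h x b) ^ 2) i.succ x')
        ≤ μ i x b * ∑ x' : S i.succ, P i x b x' * W P μ u (fun r => r ^ 2) i.succ x'
            (u i x b) :=
      fun b => mul_le_mul_of_nonneg_left (step1 b) ((hμ i x).1 b)
    refine le_trans (le_of_eq ?_) (Finset.sum_le_sum fun b _ => outer b)
    have pt : ∀ b : A,
        μ i x b * ((Jgen P μ u i.castSucc x + Dl P μ u i x b) ^ 2
          + ∑ x' : S i.succ, P i x b x' *
              Jgen P μ (fun h x b => (Dl P μ u h x b) ^ 2) i.succ x')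
        = (Jgen P μ u i.castSucc x) ^ 2 * μ i x b
          + (2 * Jgen P μ u i.castSucc x) * (μ i x b * Dl P μ u i x b)
          + μ i x b * ((Dl P μ u i x b) ^ 2
              + ∑ x' : S i.succ, P i x b x' *
                  Jgen P μ (fun h x b => (Dl P μ u h x b) ^ 2) i.succ x') := by
      intro b; ring
    rw [Finset.sum_congr rfl fun b _ => pt b, Finset.sum_add_distrib, Finset.sum_add_distrib,
      ← Finset.mul_sum, ← Finset.mul_sum, (hμ i x).2, mul_one, sum_mu_Dl P μ u hμ, mul_zero,
      add_zero]


lemma expTraj_finsum {ι : Type*} (ρ : S 0 → ℝ) (t : Finset ι)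
    (F : ι → (∀ i : Fin (H + 1), S i) → (Fin H → A) → ℝ) :
    expTraj ρ P ν (fun s a => ∑ j ∈ t, F j s a) = ∑ j ∈ t, expTraj ρ P ν (F j) := by
  simp only [expTraj, Finset.mul_sum]
  exact Eq.trans (Finset.sum_congr rfl fun s _ => Finset.sum_comm) Finset.sum_comm

lemma expTraj_mul_const (ρ : S 0 → ℝ) (c : ℝ)
    (F : (∀ i : Fin (H + 1), S i) → (Fin H → A) → ℝ) :
    expTraj ρ P ν (fun s a => F s a * c) = expTraj ρ P ν F * c := by
  simp only [expTraj, Finset.sum_mul, mul_assoc]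

lemma occ_pair (ρ : S 0 → ℝ) (h : Fin H) (ψ : S h.castSucc → A → ℝ) :
    ∑ x : S h.castSucc, ∑ b : A, occ ρ P ν h x b * ψ x b
      = expTraj ρ P ν (fun s a => ψ (s h.castSucc) (a h)) := by
  have e : ∀ (x : S h.castSucc) (b : A), occ ρ P ν h x b * ψ x b
      = expTraj ρ P ν
          (fun s a => (if s h.castSucc = x ∧ a h = b then (1 : ℝ) else 0) * ψ x b) :=
    fun x b => (expTraj_mul_const P ν ρ (ψ x b) _).symm
  simp only [e]
  calc ∑ x : S h.castSucc, ∑ b : A, expTraj ρ P ν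
          (fun s a => (if s h.castSucc = x ∧ a h = b then (1 : ℝ) else 0) * ψ x b)
      = ∑ x : S h.castSucc, expTraj ρ P ν
          (fun s a => ∑ b : A, (if s h.castSucc = x ∧ a h = b then (1 : ℝ) else 0) * ψ x b) :=
        Finset.sum_congr rfl fun x _ => (expTraj_finsum P ν ρ Finset.univ _).symm
    _ = expTraj ρ P ν (fun s a => ∑ x : S h.castSucc, ∑ b : A,
          (if s h.castSucc = x ∧ a h = b then (1 : ℝ) else 0) * ψ x b) :=
        (expTraj_finsum P ν ρ Finset.univ _).symm
    _ = expTraj ρ P ν (fun s a => ψ (s h.castSucc) (a h)) := by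
        refine congrArg _ ?_
        funext s a
        have hb : ∀ x : S h.castSucc,
            (∑ b : A, (if s h.castSucc = x ∧ a h = b then (1 : ℝ) else 0) * ψ x b)
              = if s h.castSucc = x then ψ x (a h) else 0 := by
          intro x
          by_cases hx : s h.castSucc = x
          · simp [hx, eq_comm]
          · simp [hx]
        rw [Finset.sum_congr rfl fun x _ => hb x, Finset.sum_ite_eq]
        simp

lemma expTraj_one (ρ : S 0 → ℝ) (hρ : IsPMF ρ) (hP : ∀ h x b, IsPMF (P h x b))
    (hν : ∀ h x, IsPMF (ν h x)) : expTraj ρ P ν (fun _ _ => (1 : ℝ)) = 1 := by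
  have h : expTraj ρ P ν (fun _ _ => (1 : ℝ))
      = ∑ x, ρ x * W P ν (fun _ _ _ => 0) (fun _ => 1) 0 x 0 :=
    expTraj_theta_sum H S A ρ P ν (fun _ _ _ => 0) (fun _ => 1)
  rw [h]
  have e : ∀ x : S 0, W P ν (fun _ _ _ => (0 : ℝ)) (fun _ => (1 : ℝ)) 0 x 0 = 1 :=
    fun x => W_const P ν _ hP hν 0 x 0
  simp only [e, mul_one]
  exact hρ.2

lemma occ_sum_one (ρ : S 0 → ℝ) (hρ : IsPMF ρ) (hP : ∀ h x b, IsPMF (P h x b))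
    (hν : ∀ h x, IsPMF (ν h x)) (h : Fin H) :
    ∑ x : S h.castSucc, ∑ b : A, occ ρ P ν h x b = 1 := by
  have e := occ_pair P ν ρ h (fun _ _ => (1 : ℝ))
  simp only [mul_one] at e
  rw [e, expTraj_one P ν ρ hρ hP hν]

lemma expTraj_sum_u (ρ : S 0 → ℝ) (hP : ∀ h x b, IsPMF (P h x b))
    (hν : ∀ h x, IsPMF (ν h x)) :
    expTraj ρ P ν (fun s a => ∑ h, u h (s h.castSucc) (a h))
      = ∑ x, ρ x * Jgen P ν u 0 x := by
  have h : expTraj ρ P ν (fun s a => ∑ h, u h (s h.castSucc) (a h))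
      = ∑ x, ρ x * W P ν u (fun r => r) 0 x 0 :=
    expTraj_theta_sum H S A ρ P ν u (fun r => r)
  rw [h]
  refine Finset.sum_congr rfl fun x _ => ?_
  rw [W_id P ν u hP hν 0 x 0, zero_add]

lemma occ_chain (ρ : S 0 → ℝ) (hP : ∀ h x b, IsPMF (P h x b))
    (hν : ∀ h x, IsPMF (ν h x)) :
    ∑ h : Fin H, ∑ x : S h.castSucc, ∑ b : A, occ ρ P ν h x b * u h x b
      = ∑ x, ρ x * Jgen P ν u 0 x := by
  calc ∑ h : Fin H, ∑ x : S h.castSucc, ∑ b : A, occ ρ P ν h x b * u h x b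
      = ∑ h : Fin H, expTraj ρ P ν (fun s a => u h (s h.castSucc) (a h)) :=
        Finset.sum_congr rfl fun h _ => occ_pair P ν ρ h (u h)
    _ = expTraj ρ P ν (fun s a => ∑ h, u h (s h.castSucc) (a h)) :=
        (expTraj_finsum P ν ρ Finset.univ _).symm
    _ = ∑ x, ρ x * Jgen P ν u 0 x := expTraj_sum_u P ν u ρ hP hν


set_option maxHeartbeats 2000000 in
/-- **Change-of-Trajectory-Measure Lemma.** For every policy `π`, every policy `μ` whose
step-wise occupancy measures have full support, and every family of functions
`f h : S h × A → ℝ`, the square of the expected trajectory sum under `π` is bounded by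
`(1 + Σ_h χ²(d_h^π ‖ d_h^μ))` times the second moment of the trajectory sum under `μ`. -/
theorem change_of_trajectory_measure
    (hH : 0 < H) [∀ i, Nonempty (S i)] [Nonempty A]
    (ρ : S 0 → ℝ) (hρ : IsPMF ρ)
    (P : ∀ h : Fin H, S h.castSucc → A → S h.succ → ℝ)
    (hP : ∀ h s a, IsPMF (P h s a))
    (π μ : ∀ h : Fin H, S h.castSucc → A → ℝ)
    (hπ : ∀ h s, IsPMF (π h s)) (hμ : ∀ h s, IsPMF (μ h s))
    (hsupp : ∀ (h : Fin H) (s : S h.castSucc) (a : A), 0 < occ ρ P μ h s a)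
    (f : ∀ h : Fin H, S h.castSucc → A → ℝ) :
    (expTraj ρ P π (fun s a => ∑ h : Fin H, f h (s h.castSucc) (a h))) ^ 2 ≤
      (1 + ∑ h : Fin H,
          chiSq (fun x : S h.castSucc × A => occ ρ P π h x.1 x.2)
                (fun x : S h.castSucc × A => occ ρ P μ h x.1 x.2)) *
        expTraj ρ P μ (fun s a => (∑ h : Fin H, f h (s h.castSucc) (a h)) ^ 2) := by
  -- Step A : expectation under π via martingale increments
  have hEpi : expTraj ρ P π (fun s a => ∑ h : Fin H, f h (s h.castSucc) (a h))
      = (∑ x, ρ x * Jgen P μ f 0 x)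
        + ∑ h : Fin H, ∑ x : S h.castSucc, ∑ b : A,
            occ ρ P π h x b * Dl P μ f h x b := by
    rw [expTraj_sum_u P π f ρ hP hπ, occ_chain P π (Dl P μ f) ρ hP hπ,
      ← Finset.sum_add_distrib]
    refine Finset.sum_congr rfl fun x _ => ?_
    rw [Jgen_decomp P π μ f hπ 0 x, mul_add]
  have hZero : ∑ h : Fin H, ∑ x : S h.castSucc, ∑ b : A,
      occ ρ P μ h x b * Dl P μ f h x b = 0 := by
    rw [occ_chain P μ (Dl P μ f) ρ hP hμ]
    have e : ∀ x : S 0, Jgen P μ (Dl P μ f) 0 x = 0 := fun x => Jgen_Dl_zero P μ f hμ 0 x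
    simp [e]
  have hEpi2 : expTraj ρ P π (fun s a => ∑ h : Fin H, f h (s h.castSucc) (a h))
      = (∑ x, ρ x * Jgen P μ f 0 x)
        + ∑ h : Fin H, ∑ x : S h.castSucc, ∑ b : A,
            (occ ρ P π h x b - occ ρ P μ h x b) * Dl P μ f h x b := by
    rw [hEpi]
    congr 1
    have expand : ∑ h : Fin H, ∑ x : S h.castSucc, ∑ b : A,
        (occ ρ P π h x b - occ ρ P μ h x b) * Dl P μ f h x b
        = (∑ h : Fin H, ∑ x : S h.castSucc, ∑ b : A, occ ρ P π h x b * Dl P μ f h x b)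
          - ∑ h : Fin H, ∑ x : S h.castSucc, ∑ b : A, occ ρ P μ h x b * Dl P μ f h x b := by
      simp only [sub_mul, Finset.sum_sub_distrib]
    rw [expand, hZero, sub_zero]
  -- Step B : second moment under μ is bounded below
  have hEmu : expTraj ρ P μ (fun s a => (∑ h : Fin H, f h (s h.castSucc) (a h)) ^ 2)
      = ∑ x, ρ x * W P μ f (fun r => r ^ 2) 0 x 0 :=
    expTraj_theta_sum H S A ρ P μ f (fun r => r ^ 2)
  have hB : (∑ x, ρ x * Jgen P μ f 0 x) ^ 2
        + ∑ h : Fin H, ∑ x : S h.castSucc, ∑ b : A,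
            occ ρ P μ h x b * (Dl P μ f h x b) ^ 2
      ≤ expTraj ρ P μ (fun s a => (∑ h : Fin H, f h (s h.castSucc) (a h)) ^ 2) := by
    rw [hEmu, occ_chain P μ (fun h x b => (Dl P μ f h x b) ^ 2) ρ hP hμ]
    have hKx : ∀ x : S 0,
        ρ x * ((Jgen P μ f 0 x) ^ 2 + Jgen P μ (fun h x b => (Dl P μ f h x b) ^ 2) 0 x)
          ≤ ρ x * W P μ f (fun r => r ^ 2) 0 x 0 :=
      fun x => mul_le_mul_of_nonneg_left (K_lower P μ f hP hμ 0 x) (hρ.1 x)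
    refine le_trans ?_ (Finset.sum_le_sum fun x _ => hKx x)
    have hsplit : ∑ x, ρ x * ((Jgen P μ f 0 x) ^ 2
          + Jgen P μ (fun h x b => (Dl P μ f h x b) ^ 2) 0 x)
        = (∑ x, ρ x * (Jgen P μ f 0 x) ^ 2)
          + ∑ x, ρ x * Jgen P μ (fun h x b => (Dl P μ f h x b) ^ 2) 0 x := by
      rw [← Finset.sum_add_distrib]
      exact Finset.sum_congr rfl fun x _ => mul_add _ _ _
    rw [hsplit]
    exact add_le_add_left (jensen_sq ρ _ hρ.1 hρ.2) _
  -- Step C : Cauchy-Schwarz over the extended index type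
  set Fv : Option ((h : Fin H) × (S h.castSucc × A)) → ℝ := fun o => o.elim 1
    (fun p => (occ ρ P π p.1 p.2.1 p.2.2 - occ ρ P μ p.1 p.2.1 p.2.2)
      / Real.sqrt (occ ρ P μ p.1 p.2.1 p.2.2)) with hFv
  set Gv : Option ((h : Fin H) × (S h.castSucc × A)) → ℝ := fun o => o.elim
    (∑ x, ρ x * Jgen P μ f 0 x)
    (fun p => Real.sqrt (occ ρ P μ p.1 p.2.1 p.2.2) * Dl P μ f p.1 p.2.1 p.2.2) with hGv
  have hopt : ∀ g : Option ((h : Fin H) × (S h.castSucc × A)) → ℝ,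
      ∑ o, g o = g none + ∑ h : Fin H, ∑ x : S h.castSucc, ∑ b : A, g (some ⟨h, (x, b)⟩) := by
    intro g
    rw [univ_option, Finset.sum_insertNone, ← Finset.univ_sigma_univ, Finset.sum_sigma]
    refine congrArg _ (Finset.sum_congr rfl fun h _ => ?_)
    rw [Fintype.sum_prod_type]
  have hCS := Finset.sum_mul_sq_le_sq_mul_sq Finset.univ Fv Gv
  have hFG : ∑ o, Fv o * Gv o
      = (∑ x, ρ x * Jgen P μ f 0 x)
        + ∑ h : Fin H, ∑ x : S h.castSucc, ∑ b : A,
            (occ ρ P π h x b - occ ρ P μ h x b) * Dl P μ f h x b := by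
    rw [hopt (fun o => Fv o * Gv o)]
    simp only [hFv, hGv, Option.elim_none, Option.elim_some, one_mul]
    refine congrArg _ (Finset.sum_congr rfl fun h _ => Finset.sum_congr rfl fun x _ =>
      Finset.sum_congr rfl fun b _ => ?_)
    have hq := hsupp h x b
    have hs : Real.sqrt (occ ρ P μ h x b) ≠ 0 := ne_of_gt (Real.sqrt_pos.mpr hq)
    field_simp
  have hF2 : ∑ o, Fv o ^ 2
      = 1 + ∑ h : Fin H,
          chiSq (fun x : S h.castSucc × A => occ ρ P π h x.1 x.2)
                (fun x : S h.castSucc × A => occ ρ P μ h x.1 x.2) := by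
    rw [hopt (fun o => Fv o ^ 2)]
    simp only [hFv, Option.elim_none, Option.elim_some, one_pow]
    refine congrArg _ (Finset.sum_congr rfl fun h _ => ?_)
    have hpt : ∀ (x : S h.castSucc) (b : A),
        ((occ ρ P π h x b - occ ρ P μ h x b) / Real.sqrt (occ ρ P μ h x b)) ^ 2
        = (occ ρ P π h x b) ^ 2 / occ ρ P μ h x b
          - 2 * occ ρ P π h x b + occ ρ P μ h x b := by
      intro x b
      have hq := hsupp h x b
      rw [div_pow, Real.sq_sqrt hq.le]
      field_simp
      ring
    rw [Finset.sum_congr rfl fun x _ => Finset.sum_congr rfl fun b _ => hpt x b]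
    simp only [Finset.sum_add_distrib, Finset.sum_sub_distrib, ← Finset.mul_sum]
    rw [occ_sum_one P π ρ hρ hP hπ h, occ_sum_one P μ ρ hρ hP hμ h, chiSq,
      Fintype.sum_prod_type]
    ring
  have hG2 : ∑ o, Gv o ^ 2
      = (∑ x, ρ x * Jgen P μ f 0 x) ^ 2
        + ∑ h : Fin H, ∑ x : S h.castSucc, ∑ b : A,
            occ ρ P μ h x b * (Dl P μ f h x b) ^ 2 := by
    rw [hopt (fun o => Gv o ^ 2)]
    simp only [hGv, Option.elim_none, Option.elim_some]
    refine congrArg _ (Finset.sum_congr rfl fun h _ => Finset.sum_congr rfl fun x _ =>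
      Finset.sum_congr rfl fun b _ => ?_)
    rw [mul_pow, Real.sq_sqrt (hsupp h x b).le]
  have hnn : (0 : ℝ) ≤ 1 + ∑ h : Fin H,
      chiSq (fun x : S h.castSucc × A => occ ρ P π h x.1 x.2)
            (fun x : S h.castSucc × A => occ ρ P μ h x.1 x.2) := by
    rw [← hF2]
    exact Finset.sum_nonneg fun o _ => sq_nonneg _
  calc (expTraj ρ P π (fun s a => ∑ h : Fin H, f h (s h.castSucc) (a h))) ^ 2
      = (∑ o, Fv o * Gv o) ^ 2 := by rw [hEpi2, hFG]
    _ ≤ (∑ o, Fv o ^ 2) * ∑ o, Gv o ^ 2 := hCS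
    _ = (1 + ∑ h : Fin H,
          chiSq (fun x : S h.castSucc × A => occ ρ P π h x.1 x.2)
                (fun x : S h.castSucc × A => occ ρ P μ h x.1 x.2))
        * ((∑ x, ρ x * Jgen P μ f 0 x) ^ 2
          + ∑ h : Fin H, ∑ x : S h.castSucc, ∑ b : A,
              occ ρ P μ h x b * (Dl P μ f h x b) ^ 2) := by rw [hF2, hG2]
    _ ≤ (1 + ∑ h : Fin H,
          chiSq (fun x : S h.castSucc × A => occ ρ P π h x.1 x.2)
                (fun x : S h.castSucc × A => occ ρ P μ h x.1 x.2))
        * expTraj ρ P μ (fun s a => (∑ h : Fin H, f h (s h.castSucc) (a h)) ^ 2) :=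
        mul_le_mul_of_nonneg_left hB hnn


end TBRM
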